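/- For every infinite cardinal λ there exists a λ-regular filter on λ, i.e., a filter D on λ together with a family ⟨X_i : i < λ⟩ of elements of D such that every point t < λ belongs to only finitely many of the sets X_i. -/
import Mathlib


universe u

/-- For every infinite cardinal `λ` there exists a `λ`-regular filter on `λ`:
a (proper) filter `D` on `λ` together with a family `⟨X i : i < λ⟩` of members of
`D` such that every point `t` belongs to only finitely many of the sets `X i`. -/
theorem exists_regular_filter (lam : Cardinal.{u}) (hlam : Cardinal.aleph0 ≤ lam) :
    ∃ (D : Filter lam.out) (X : lam.out → Set lam.out),
      D.NeBot ∧ (∀ i, X i ∈ D) ∧ ∀ t : lam.out, {i | t ∈ X i}.Finite := by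
  have hinf : Infinite lam.out := by
    rw [Cardinal.infinite_iff, Cardinal.mk_out]; exact hlam
  have hcard : Cardinal.mk (Finset lam.out) = Cardinal.mk lam.out := by
    rw [Cardinal.mk_finset_of_infinite]
  obtain ⟨e⟩ := Cardinal.eq.1 hcard.symm
  set X : lam.out → Set lam.out := fun i => {s | i ∈ e s} with hX
  refine ⟨Filter.generate (Set.range X), X, ?_, fun i =>
    Filter.GenerateSets.basic (Set.mem_range_self i), fun t => ?_⟩
  · rw [Filter.generate_neBot_iff]
    intro T hTsub hTfin
    -- choose for each member of T an index
    have : ∀ s ∈ T, ∃ i, X i = s := fun s hs => hTsub hs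
    choose f hf using this
    classical
    have hTfin' := hTfin
    set F : Finset lam.out := hTfin.toFinset.attach.image
      (fun s => f s.1 (hTfin.mem_toFinset.1 s.2)) with hF
    refine ⟨e.symm F, ?_⟩
    intro s hs
    rw [← hf s hs]
    show f s hs ∈ e (e.symm F)
    rw [Equiv.apply_symm_apply]
    exact Finset.mem_image.2 ⟨⟨s, hTfin.mem_toFinset.2 hs⟩, Finset.mem_attach _ _, rfl⟩
  · have : {i | t ∈ X i} = ↑(e t) := by ext i; simp [hX]
    rw [this]; exact (e t).finite_toSet
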